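/- For integers n, r, k with n ≥ r ≥ 1, ∑_{j=r}^{n} S_r(n,j) c_j^{(k)} = c_{r, n-r+1}^{(k)}, where c_{r,α}^{(k)} is the shifted poly-Cauchy number of the first kind. -/
import Mathlib


open Finset

/-- Unsigned Stirling numbers of the first kind. -/
def stirling1 : ℕ → ℕ → ℕ
  | 0, 0 => 1
  | 0, _ + 1 => 0
  | _ + 1, 0 => 0
  | n + 1, k + 1 => n * stirling1 n (k + 1) + stirling1 n k

/-- Stirling numbers of the second kind. -/
def stirling2 : ℕ → ℕ → ℕ
  | 0, 0 => 1
  | 0, _ + 1 => 0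
  | _ + 1, 0 => 0
  | n + 1, k + 1 => (k + 1) * stirling2 n (k + 1) + stirling2 n k

/-- Unsigned r-Stirling numbers of the first kind. -/
def rStirling1 (r : ℕ) : ℕ → ℕ → ℕ
  | 0, m => if r = 0 ∧ m = 0 then 1 else 0
  | n + 1, m =>
    if n + 1 < r then 0
    else if n + 1 = r then (if m = r then 1 else 0)
    else n * rStirling1 r n m + (match m with | 0 => 0 | m' + 1 => rStirling1 r n m')

/-- r-Stirling numbers of the second kind. -/
def rStirling2 (r : ℕ) : ℕ → ℕ → ℕ
  | 0, m => if r = 0 ∧ m = 0 then 1 else 0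
  | n + 1, m =>
    if n + 1 < r then 0
    else if n + 1 = r then (if m = r then 1 else 0)
    else m * rStirling2 r n m + (match m with | 0 => 0 | m' + 1 => rStirling2 r n m')

/-- Poly-Cauchy numbers of the first kind `c_n^{(k)}`. -/
noncomputable def polyCauchy (k : ℤ) (n : ℕ) : ℝ :=
  ∑ ℓ ∈ range (n + 1), (-1 : ℝ) ^ (n - ℓ) * stirling1 n ℓ / ((ℓ : ℝ) + 1) ^ k

/-- Poly-Cauchy numbers of the second kind `ĉ_n^{(k)}`. -/
noncomputable def polyCauchy2 (k : ℤ) (n : ℕ) : ℝ :=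
  (-1 : ℝ) ^ n * ∑ ℓ ∈ range (n + 1), (stirling1 n ℓ : ℝ) / ((ℓ : ℝ) + 1) ^ k

/-- Poly-Cauchy polynomials of the first kind `c_n^{(k)}(z)`. -/
noncomputable def polyCauchyPoly (k : ℤ) (n : ℕ) (z : ℝ) : ℝ :=
  ∑ m ∈ range (n + 1), (stirling1 n m : ℝ) * (-1 : ℝ) ^ (n - m) *
    ∑ i ∈ range (m + 1), (m.choose i : ℝ) * z ^ (m - i) / ((i : ℝ) + 1) ^ k

/-- Shifted poly-Cauchy numbers of the first kind `c_{n,α}^{(k)}`. -/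
noncomputable def shiftedPolyCauchy (k : ℤ) (n : ℕ) (α : ℝ) : ℝ :=
  ∑ m ∈ range (n + 1), (stirling1 n m : ℝ) * (-1 : ℝ) ^ (n - m) / ((m : ℝ) + α) ^ k

/-- Shifted poly-Cauchy numbers of the second kind `ĉ_{n,α}^{(k)}`. -/
noncomputable def shiftedPolyCauchy2 (k : ℤ) (n : ℕ) (α : ℝ) : ℝ :=
  (-1 : ℝ) ^ n * ∑ m ∈ range (n + 1), (stirling1 n m : ℝ) / ((m : ℝ) + α) ^ k

lemma stirling1_eq_zero_of_lt : ∀ {n ℓ : ℕ}, n < ℓ → stirling1 n ℓ = 0 := by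
  intro n
  induction n with
  | zero =>
    intro ℓ h
    cases ℓ with
    | zero => omega
    | succ ℓ => rfl
  | succ n ih =>
    intro ℓ h
    cases ℓ with
    | zero => omega
    | succ ℓ =>
      show n * stirling1 n (ℓ + 1) + stirling1 n ℓ = 0
      rw [ih (by omega), ih (by omega)]; simp

lemma stirling1_zero (r : ℕ) (hr : 1 ≤ r) : stirling1 r 0 = 0 := by
  cases r with
  | zero => omega
  | succ r => rfl

lemma stirling1_succ (j ℓ : ℕ) :
    stirling1 (j + 1) (ℓ + 1) = j * stirling1 j (ℓ + 1) + stirling1 j ℓ := rfl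

lemma rStirling2_unfold (r n j : ℕ) :
    rStirling2 r (n + 1) j =
      if n + 1 < r then 0
      else if n + 1 = r then (if j = r then 1 else 0)
      else j * rStirling2 r n j +
        (match j with | 0 => 0 | j' + 1 => rStirling2 r n j') := rfl

lemma rStirling2_eq_zero_of_lt (r : ℕ) : ∀ n j, j < r → rStirling2 r n j = 0 := by
  intro n
  induction n with
  | zero => intro j h; simp [rStirling2]; omega
  | succ n ih =>
    intro j h
    rw [rStirling2_unfold]
    split_ifs with h1 h2 h3
    · rfl
    · omega
    · rfl
    · rw [ih j h]
      cases j with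
      | zero => rfl
      | succ j' => simp [ih j' (by omega)]

lemma rStirling2_eq_zero_of_gt (r : ℕ) : ∀ n j, n < j → rStirling2 r n j = 0 := by
  intro n
  induction n with
  | zero => intro j h; simp [rStirling2]; omega
  | succ n ih =>
    intro j h
    rw [rStirling2_unfold]
    split_ifs with h1 h2 h3
    · rfl
    · omega
    · rfl
    · rw [ih j (by omega)]
      cases j with
      | zero => rfl
      | succ j' => simp [ih j' (by omega)]

lemma rStirling2_self (r : ℕ) (hr : 1 ≤ r) (j : ℕ) :
    rStirling2 r r j = if j = r then 1 else 0 := by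
  cases r with
  | zero => omega
  | succ r' => simp [rStirling2]

lemma rStirling2_succ_succ (r n : ℕ) (hn : r ≤ n) (j : ℕ) :
    rStirling2 r (n + 1) (j + 1) = (j + 1) * rStirling2 r n (j + 1) + rStirling2 r n j := by
  show (if n + 1 < r then 0
      else if n + 1 = r then (if j + 1 = r then 1 else 0)
      else (j + 1) * rStirling2 r n (j + 1) + rStirling2 r n j) = _
  rw [if_neg (by omega), if_neg (by omega)]

lemma neg_one_pow_mul_self (m : ℕ) : ((-1 : ℝ)) ^ m * (-1) ^ m = 1 := by
  rw [← mul_pow]; norm_num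

lemma key (r : ℕ) (hr : 1 ≤ r) (n : ℕ) (hn : r ≤ n) : ∀ ℓ : ℕ,
    ∑ j ∈ range (n + 1), (rStirling2 r n j : ℝ) * (-1) ^ j * stirling1 j ℓ
      = (-1) ^ n * stirling1 r (ℓ - (n - r)) := by
  induction n, hn using Nat.le_induction with
  | base =>
    intro ℓ
    simp only [rStirling2_self r hr, Nat.sub_self, Nat.sub_zero]
    rw [Finset.sum_eq_single_of_mem r (by simp)]
    · simp
    · intro b _ hb
      simp [hb]
  | succ n hn ih =>
    intro ℓ
    have hA : rStirling2 r n (n + 1) = 0 := rStirling2_eq_zero_of_gt r n (n + 1) (by omega)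
    have h0 : rStirling2 r (n + 1) 0 = 0 := rStirling2_eq_zero_of_lt r (n + 1) 0 hr
    cases ℓ with
    | zero =>
      have hz : ∑ j ∈ range (n + 2), (rStirling2 r (n + 1) j : ℝ) * (-1) ^ j * stirling1 j 0 = 0 := by
        apply Finset.sum_eq_zero
        intro j _
        cases j with
        | zero => simp [h0]
        | succ j' => simp [show stirling1 (j' + 1) 0 = 0 from rfl]
      rw [hz, Nat.zero_sub, stirling1_zero r hr]
      simp
    | succ ℓ =>
      set G : ℕ → ℝ := fun j => (j : ℝ) * rStirling2 r n j * (-1) ^ j * stirling1 j (ℓ + 1) with hG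
      have hterm : ∀ i ∈ range (n + 1),
          (rStirling2 r (n + 1) (i + 1) : ℝ) * (-1) ^ (i + 1) * stirling1 (i + 1) (ℓ + 1)
            = (G (i + 1) - G i) - (rStirling2 r n i : ℝ) * (-1) ^ i * stirling1 i ℓ := by
        intro i _
        have e1 : (rStirling2 r (n + 1) (i + 1) : ℝ)
            = (i + 1) * rStirling2 r n (i + 1) + rStirling2 r n i := by
          rw [rStirling2_succ_succ r n hn i]; push_cast; ring
        have e2 : (stirling1 (i + 1) (ℓ + 1) : ℝ) = i * stirling1 i (ℓ + 1) + stirling1 i ℓ := by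
          rw [stirling1_succ]; push_cast; ring
        simp only [hG]
        rw [e1, e2]
        push_cast
        ring
      rw [Finset.sum_range_succ', Finset.sum_congr rfl hterm]
      rw [Finset.sum_sub_distrib, Finset.sum_range_sub G, ih ℓ]
      have hG0 : G 0 = 0 := by simp [hG]
      have hGn : G (n + 1) = 0 := by simp [hG, hA]
      have hsub : ℓ - (n - r) = ℓ + 1 - (n + 1 - r) := by omega
      rw [hG0, hGn, hsub, h0]
      push_cast
      ring

theorem stmt15 (n r : ℕ) (k : ℤ) (hr : 1 ≤ r) (hn : r ≤ n) :
    ∑ j ∈ Finset.Icc r n, (rStirling2 r n j : ℝ) * polyCauchy k j =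
      shiftedPolyCauchy k r ((n : ℝ) - (r : ℝ) + 1) := by
  -- Step 1: extend sum to range (n+1)
  have step1 : ∑ j ∈ Finset.Icc r n, (rStirling2 r n j : ℝ) * polyCauchy k j
      = ∑ j ∈ range (n + 1), (rStirling2 r n j : ℝ) * polyCauchy k j := by
    apply Finset.sum_subset
    · intro x hx; simp only [Finset.mem_Icc] at hx; simp only [Finset.mem_range]; omega
    · intro x hx hx'
      simp only [Finset.mem_range] at hx
      simp only [Finset.mem_Icc] at hx'
      rw [rStirling2_eq_zero_of_lt r n x (by omega)]
      simp
  rw [step1]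
  -- Step 2: rewrite each polyCauchy term as a sum over range (n+1)
  have step2 : ∀ j ∈ range (n + 1), (rStirling2 r n j : ℝ) * polyCauchy k j
      = ∑ ℓ ∈ range (n + 1),
          (rStirling2 r n j : ℝ) * (-1) ^ j * stirling1 j ℓ * ((-1) ^ ℓ / ((ℓ : ℝ) + 1) ^ k) := by
    intro j hj
    simp only [Finset.mem_range] at hj
    rw [polyCauchy, Finset.mul_sum]
    rw [Finset.sum_subset (show range (j + 1) ⊆ range (n + 1) by
      intro x hx; simp only [Finset.mem_range] at *; omega)]
    · apply Finset.sum_congr rfl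
      intro ℓ _
      by_cases hℓ : ℓ ≤ j
      · obtain ⟨d, rfl⟩ : ∃ d, j = ℓ + d := ⟨j - ℓ, by omega⟩
        have hd : ℓ + d - ℓ = d := by omega
        rw [hd, div_eq_mul_inv, div_eq_mul_inv, pow_add]
        have hsq : ((-1 : ℝ)) ^ ℓ * (-1) ^ ℓ = 1 := neg_one_pow_mul_self ℓ
        linear_combination (-((rStirling2 r n (ℓ + d) : ℝ) * (-1) ^ d *
          (stirling1 (ℓ + d) ℓ : ℝ) * (((ℓ : ℝ) + 1) ^ k)⁻¹)) * hsq
      · rw [stirling1_eq_zero_of_lt (show j < ℓ by omega)]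
        simp
    · intro x hx hx'
      simp only [Finset.mem_range] at hx hx'
      rw [stirling1_eq_zero_of_lt (show j < x by omega)]
      simp
  rw [Finset.sum_congr rfl step2, Finset.sum_comm]
  -- Step 3: apply the key identity
  have step3 : ∀ ℓ ∈ range (n + 1),
      ∑ j ∈ range (n + 1),
          (rStirling2 r n j : ℝ) * (-1) ^ j * stirling1 j ℓ * ((-1) ^ ℓ / ((ℓ : ℝ) + 1) ^ k)
      = (-1) ^ n * stirling1 r (ℓ - (n - r)) * ((-1) ^ ℓ / ((ℓ : ℝ) + 1) ^ k) := by
    intro ℓ _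
    rw [← Finset.sum_mul, key r hr n hn ℓ]
  rw [Finset.sum_congr rfl step3]
  -- Step 4: split off the vanishing initial part and reindex
  rw [Finset.range_eq_Ico, ← Finset.sum_Ico_consecutive _ (Nat.zero_le (n - r)) (by omega : n - r ≤ n + 1)]
  have hzero : ∑ ℓ ∈ Finset.Ico 0 (n - r),
      (-1 : ℝ) ^ n * stirling1 r (ℓ - (n - r)) * ((-1) ^ ℓ / ((ℓ : ℝ) + 1) ^ k) = 0 := by
    apply Finset.sum_eq_zero
    intro ℓ hℓ
    simp only [Finset.mem_Ico] at hℓ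
    rw [show ℓ - (n - r) = 0 by omega, stirling1_zero r hr]
    simp
  rw [hzero, zero_add, Finset.sum_Ico_eq_sum_range]
  rw [show n + 1 - (n - r) = r + 1 by omega]
  -- Step 5: match terms
  rw [shiftedPolyCauchy]
  apply Finset.sum_congr rfl
  intro i hi
  simp only [Finset.mem_range] at hi
  obtain ⟨d, rfl⟩ : ∃ d, n = r + d := ⟨n - r, by omega⟩
  obtain ⟨e, hre⟩ : ∃ e, r = i + e := ⟨r - i, by omega⟩
  have h1 : r + d - r = d := by omega
  have h2 : d + i - d = i := by omega
  have h3 : r - i = e := by omega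
  rw [h1, h2, h3]
  have hbase : ((d + i : ℕ) : ℝ) + 1 = (i : ℝ) + (((r + d : ℕ) : ℝ) - (r : ℝ) + 1) := by
    push_cast; ring
  rw [hbase]
  have hsign : (-1 : ℝ) ^ (r + d) * (-1) ^ (d + i) = (-1) ^ e := by
    rw [show r + d = e + (d + i) from by omega, pow_add, mul_assoc,
      neg_one_pow_mul_self (d + i), mul_one]
  rw [div_eq_mul_inv, div_eq_mul_inv]
  linear_combination ((stirling1 r i : ℝ) * (((i : ℝ) + (((r + d : ℕ) : ℝ) - (r : ℝ) + 1)) ^ k)⁻¹) * hsign
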